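/- Let R = ℤ[x,y]/(x^(N+1), y^(N+1)), let n, m be integers, and define α = ∑_{0 ≤ i, j ≤ N} a_{i,j} x^i y^j ∈ R where a_{N-j, i} = (-1)^j · binom(n-j, i-j) · m^(i-j) for 0 ≤ i, j ≤ N (with binom the generalized integer binomial coefficient, equal to 0 when i < j). Then the induced endomorphism β ↦ (∑_j a_{N-j,i} β_j)_i of ℤ^(N+1) is an involution: applying it twice returns β. -/

import Mathlib

/-- The alternating Vandermonde-type sum: for `r : ℤ` and `d : ℕ`,
`∑_{l=0}^{d} (-1)^l C(r, l) C(r - l, d - l) = [d = 0]`. -/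
lemma key_sum (r : ℤ) (d : ℕ) :
    ∑ l ∈ Finset.range (d + 1),
      (-1 : ℤ) ^ l * Ring.choose (r - l) (d - l) * Ring.choose r l
      = if d = 0 then 1 else 0 := by
  have h1 : ∀ l ∈ Finset.range (d + 1),
      (-1 : ℤ) ^ l * Ring.choose (r - l) (d - l) * Ring.choose r l
        = ((-1 : ℤ) ^ l * (d.choose l : ℤ)) * Ring.choose r d := by
    intro l hl
    have hld : l ≤ d := Nat.lt_succ_iff.mp (Finset.mem_range.mp hl)
    have h := Ring.choose_smul_choose r (n := d) (k := l) hld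
    have h' : (d.choose l : ℤ) * Ring.choose r d
        = Ring.choose r l * Ring.choose (r - l) (d - l) := by
      simpa [nsmul_eq_mul] using h
    calc (-1 : ℤ) ^ l * Ring.choose (r - l) (d - l) * Ring.choose r l
        = (-1 : ℤ) ^ l * (Ring.choose r l * Ring.choose (r - l) (d - l)) := by ring
      _ = (-1 : ℤ) ^ l * ((d.choose l : ℤ) * Ring.choose r d) := by rw [← h']
      _ = ((-1 : ℤ) ^ l * (d.choose l : ℤ)) * Ring.choose r d := by ring
  rw [Finset.sum_congr rfl h1, ← Finset.sum_mul, Int.alternating_sum_range_choose]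
  by_cases hd : d = 0 <;> simp [hd]

/-- Key lemma: the matrix `A i j = [j ≤ i] (-1)^j C(n-j, i-j) m^(i-j)` squares to the
identity. -/
lemma key_matrix (n m : ℤ) (N i k : ℕ) (hiN : i ≤ N) :
    ∑ j ∈ Finset.range (N + 1),
      (if j ≤ i then (-1 : ℤ) ^ j * Ring.choose (n - (j : ℤ)) (i - j) * m ^ (i - j) else 0)
      * (if k ≤ j then (-1 : ℤ) ^ k * Ring.choose (n - (k : ℤ)) (j - k) * m ^ (j - k) else 0)
      = if k = i then 1 else 0 := by
  by_cases hki : k ≤ i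
  ·
    -- restrict the sum to Icc k i
    have hrestrict : ∑ j ∈ Finset.range (N + 1),
        (if j ≤ i then (-1 : ℤ) ^ j * Ring.choose (n - (j : ℤ)) (i - j) * m ^ (i - j) else 0)
        * (if k ≤ j then (-1 : ℤ) ^ k * Ring.choose (n - (k : ℤ)) (j - k) * m ^ (j - k) else 0)
        = ∑ j ∈ Finset.Ico k (i + 1),
          ((-1 : ℤ) ^ j * Ring.choose (n - (j : ℤ)) (i - j) * m ^ (i - j))
          * ((-1 : ℤ) ^ k * Ring.choose (n - (k : ℤ)) (j - k) * m ^ (j - k)) := by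
      have hsub : Finset.Ico k (i + 1) ⊆ Finset.range (N + 1) := by
        intro x hx
        rw [Finset.mem_Ico] at hx
        rw [Finset.mem_range]
        omega
      rw [← Finset.sum_subset hsub]
      · apply Finset.sum_congr rfl
        intro j hj
        rw [Finset.mem_Ico] at hj
        rw [if_pos (Nat.lt_succ_iff.mp hj.2), if_pos hj.1]
      · intro j _ hj
        rw [Finset.mem_Ico, not_and_or] at hj
        rcases hj with hj | hj
        · rw [if_neg (fun h => hj h), mul_zero]
        · rw [if_neg (fun h => hj (Nat.lt_succ_of_le h)), zero_mul]
    rw [hrestrict, Finset.sum_Ico_eq_sum_range]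
    have hik : i + 1 - k = (i - k) + 1 := by omega
    rw [hik]
    set d := i - k with hd
    have hfinal : ∑ l ∈ Finset.range (d + 1),
        ((-1 : ℤ) ^ (k + l) * Ring.choose (n - ((k + l : ℕ) : ℤ)) (i - (k + l))
          * m ^ (i - (k + l)))
        * ((-1 : ℤ) ^ k * Ring.choose (n - (k : ℤ)) ((k + l) - k) * m ^ ((k + l) - k))
        = m ^ d * ∑ l ∈ Finset.range (d + 1),
            (-1 : ℤ) ^ l * Ring.choose ((n - k) - l) (d - l) * Ring.choose (n - k) l := by
      rw [Finset.mul_sum]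
      apply Finset.sum_congr rfl
      intro l hl
      have hld : l ≤ d := Nat.lt_succ_iff.mp (Finset.mem_range.mp hl)
      have h1 : i - (k + l) = d - l := by omega
      have h2 : (k + l) - k = l := by omega
      have h3 : (n - ((k + l : ℕ) : ℤ)) = (n - k) - l := by push_cast; ring
      have h4 : m ^ (d - l) * m ^ l = m ^ d := by
        rw [← pow_add, Nat.sub_add_cancel hld]
      have h5 : (-1 : ℤ) ^ (k + l) * (-1 : ℤ) ^ k = (-1 : ℤ) ^ l := by
        rw [← pow_add]
        have hkk : k + l + k = 2 * k + l := by omega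
        rw [hkk, pow_add, pow_mul]
        norm_num
      rw [h1, h2, h3]
      calc ((-1 : ℤ) ^ (k + l) * Ring.choose ((n - k) - l) (d - l) * m ^ (d - l))
            * ((-1 : ℤ) ^ k * Ring.choose (n - (k : ℤ)) l * m ^ l)
          = ((-1 : ℤ) ^ (k + l) * (-1 : ℤ) ^ k) * (m ^ (d - l) * m ^ l)
            * (Ring.choose ((n - k) - l) (d - l) * Ring.choose (n - (k : ℤ)) l) := by ring
        _ = m ^ d * ((-1 : ℤ) ^ l * Ring.choose ((n - k) - l) (d - l)
            * Ring.choose (n - k) l) := by rw [h4, h5]; ring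
    rw [hfinal, key_sum]
    by_cases hdk : d = 0
    · have : k = i := by omega
      simp [this, hdk]
    · have : ¬ (k = i) := by omega
      simp [this, hdk]
  · -- every term vanishes
    rw [if_neg (fun h => hki (le_of_eq h))]
    apply Finset.sum_eq_zero
    intro j hj
    by_cases h2 : k ≤ j
    · by_cases h1 : j ≤ i
      · exact absurd (le_trans h2 h1) hki
      · simp [h1]
    · simp [h2]

theorem stmt_14 (N : ℕ) (n m : ℤ) (a : ℕ → ℕ → ℤ)
    (ha : ∀ i ≤ N, ∀ j ≤ N,
      a (N - j) i = if j ≤ i then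
        (-1 : ℤ) ^ j * Ring.choose (n - (j : ℤ)) (i - j) * m ^ (i - j) else 0) :
    ∀ β : ℕ → ℤ, ∀ i ≤ N,
      ∑ j ∈ Finset.range (N + 1),
        a (N - j) i * (∑ k ∈ Finset.range (N + 1), a (N - k) j * β k) = β i := by
  intro β i hi
  have step1 : ∑ j ∈ Finset.range (N + 1),
      a (N - j) i * (∑ k ∈ Finset.range (N + 1), a (N - k) j * β k)
      = ∑ k ∈ Finset.range (N + 1),
          (∑ j ∈ Finset.range (N + 1),
            (if j ≤ i then (-1 : ℤ) ^ j * Ring.choose (n - (j : ℤ)) (i - j)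
              * m ^ (i - j) else 0)
            * (if k ≤ j then (-1 : ℤ) ^ k * Ring.choose (n - (k : ℤ)) (j - k)
              * m ^ (j - k) else 0)) * β k := by
    calc ∑ j ∈ Finset.range (N + 1),
          a (N - j) i * (∑ k ∈ Finset.range (N + 1), a (N - k) j * β k)
        = ∑ j ∈ Finset.range (N + 1), ∑ k ∈ Finset.range (N + 1),
            ((if j ≤ i then (-1 : ℤ) ^ j * Ring.choose (n - (j : ℤ)) (i - j)
              * m ^ (i - j) else 0)
            * (if k ≤ j then (-1 : ℤ) ^ k * Ring.choose (n - (k : ℤ)) (j - k)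
              * m ^ (j - k) else 0)) * β k := by
          apply Finset.sum_congr rfl
          intro j hj
          rw [Finset.mem_range, Nat.lt_succ_iff] at hj
          rw [Finset.mul_sum]
          apply Finset.sum_congr rfl
          intro k hk
          rw [Finset.mem_range, Nat.lt_succ_iff] at hk
          rw [ha i hi j hj, ha j hj k hk]
          ring
      _ = ∑ k ∈ Finset.range (N + 1), ∑ j ∈ Finset.range (N + 1),
            ((if j ≤ i then (-1 : ℤ) ^ j * Ring.choose (n - (j : ℤ)) (i - j)
              * m ^ (i - j) else 0)
            * (if k ≤ j then (-1 : ℤ) ^ k * Ring.choose (n - (k : ℤ)) (j - k)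
              * m ^ (j - k) else 0)) * β k := Finset.sum_comm
      _ = _ := by
          apply Finset.sum_congr rfl
          intro k _
          rw [Finset.sum_mul]
  rw [step1]
  have step2 : ∀ k ∈ Finset.range (N + 1),
      (∑ j ∈ Finset.range (N + 1),
        (if j ≤ i then (-1 : ℤ) ^ j * Ring.choose (n - (j : ℤ)) (i - j)
          * m ^ (i - j) else 0)
        * (if k ≤ j then (-1 : ℤ) ^ k * Ring.choose (n - (k : ℤ)) (j - k)
          * m ^ (j - k) else 0)) * β k
      = (if k = i then 1 else 0) * β k := by
    intro k _
    rw [key_matrix n m N i k hi]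
  rw [Finset.sum_congr rfl step2]
  simp [Finset.sum_ite_eq, Finset.mem_range, Nat.lt_succ_iff, hi]
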